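/- Let g = (√5−1)/2, G = (√5+1)/2, and g ≤ α ≤ 1. Define h_α(x) = (3 log G)^{−1} times: 1/(x+G+1) for x ∈ [α−2, (α−1)/(2−α)); 1/(x+G+1) + 1/(x+G−1) − 1/(x+1) for x ∈ [(α−1)/(2−α), (1−α)/α); and 1/(x+G−1) for x ∈ [(1−α)/α, α). Then ∫_{α−2}^{α} h_α(x) dx = 1. -/

import Mathlib

open MeasureTheory


/-- The invariant density h_α for g ≤ α ≤ 1. -/
noncomputable def hDen (α x : ℝ) : ℝ :=
  let G : ℝ := (Real.sqrt 5 + 1)/2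
  (3 * Real.log G)⁻¹ *
    (if x < (α-1)/(2-α) then 1/(x+G+1)
     else if x < (1-α)/α then 1/(x+G+1) + 1/(x+G-1) - 1/(x+1)
     else 1/(x+G-1))

set_option maxHeartbeats 2000000 in
/-- For g ≤ α ≤ 1 the density h_α integrates to 1 over I_α = [α−2, α). -/
theorem stmt8 (α : ℝ) (h1 : (Real.sqrt 5 - 1)/2 ≤ α) (h2 : α ≤ 1) :
    ∫ x in (α-2)..α, hDen α x = 1 := by
  have hs2 : Real.sqrt 5 ^ 2 = 5 := Real.sq_sqrt (by norm_num)
  have hs0 : (0:ℝ) ≤ Real.sqrt 5 := Real.sqrt_nonneg 5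
  have hsgt : (2:ℝ) < Real.sqrt 5 := by nlinarith
  have hslt : Real.sqrt 5 < 3 := by nlinarith
  simp only [hDen]
  set G : ℝ := (Real.sqrt 5 + 1)/2 with hGdef
  set a : ℝ := (α-1)/(2-α) with hadef
  set b : ℝ := (1-α)/α with hbdef
  clear_value G a b
  have hG2 : G^2 = G + 1 := by rw [hGdef]; nlinarith
  have hG1 : (1:ℝ) < G := by rw [hGdef]; linarith
  have hGlt : G < 2 := by rw [hGdef]; linarith
  have hGg : (3:ℝ)/2 < G := by rw [hGdef]; linarith
  have hG0 : (0:ℝ) < G := by linarith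
  have hα0 : (1:ℝ)/2 < α := by linarith
  have hαpos : (0:ℝ) < α := by linarith
  have h2α : (0:ℝ) < 2 - α := by linarith
  -- ordering
  have hA : α - 2 < a := by
    rw [hadef, lt_div_iff₀ h2α]; nlinarith
  have hA0 : a ≤ 0 := by
    rw [hadef]; apply div_nonpos_of_nonpos_of_nonneg <;> linarith
  have hB0 : (0:ℝ) ≤ b := by
    rw [hbdef]; apply div_nonneg <;> linarith
  have hB : b ≤ α := by
    rw [hbdef, div_le_iff₀ hαpos]
    nlinarith [sq_nonneg (2*α - Real.sqrt 5 + 1)]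
  have hAB : a ≤ b := le_trans hA0 hB0
  -- identities
  have ht : (0:ℝ) < α + G - 1 := by linarith
  have hb2 : b + 1 = 1/α := by rw [hbdef]; field_simp; ring
  have ha1 : a + 1 = 1/(2-α) := by rw [hadef]; field_simp; ring
  have hb1 : b + G + 1 = G*(α+G-1)/α := by
    rw [hbdef, eq_div_iff (ne_of_gt hαpos)]
    field_simp
    linear_combination -hG2
  have ha2 : a + G - 1 = (α+G-1)/(G^2*(2-α)) := by
    rw [hadef, eq_div_iff (by positivity)]
    field_simp
    linear_combination ((α-1) + (2-α)*G) * hG2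
  -- positivity of translates
  have hag : (0:ℝ) < a + G - 1 := by
    rw [ha2]; positivity
  have haG : (0:ℝ) < a + G + 1 := by linarith
  have ha1p : (0:ℝ) < a + 1 := by rw [ha1]; positivity
  have hbG : (0:ℝ) < b + G - 1 := by linarith
  have hbG1 : (0:ℝ) < b + G + 1 := by linarith
  have hb1p : (0:ℝ) < b + 1 := by linarith
  -- integral of 1/(x+c)
  have key : ∀ p q c : ℝ, 0 < p + c → 0 < q + c →
      ∫ x in p..q, 1/(x+c) = Real.log (q+c) - Real.log (p+c) := by
    intro p q c hp hq
    have h0 : (0:ℝ) ∉ Set.uIcc (p+c) (q+c) := by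
      intro h
      rcases Set.mem_uIcc.1 h with ⟨h', _⟩ | ⟨h', _⟩ <;> linarith
    rw [intervalIntegral.integral_comp_add_right (fun y => 1/y) c,
      integral_one_div h0, Real.log_div (ne_of_gt hq) (ne_of_gt hp)]
  have intble : ∀ p q c : ℝ, 0 < p + c → 0 < q + c →
      IntervalIntegrable (fun x => 1/(x+c)) volume p q := by
    intro p q c hp hq
    apply ContinuousOn.intervalIntegrable
    apply ContinuousOn.div continuousOn_const (by fun_prop)
    intro x hx
    rcases Set.mem_uIcc.1 hx with ⟨h', _⟩ | ⟨h', _⟩ <;> intro h0 <;> linarith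
  -- a.e. avoidance of endpoints
  have ae_a : ∀ᵐ x : ℝ, x ≠ a := by
    rw [ae_iff]; simpa using measure_singleton a
  have ae_b : ∀ᵐ x : ℝ, x ≠ b := by
    rw [ae_iff]; simpa using measure_singleton b
  -- congruence for integrability
  have congr_int : ∀ (u v : ℝ → ℝ) (p q : ℝ), p ≤ q →
      (∀ᵐ x : ℝ, x ∈ Set.Ioc p q → u x = v x) →
      IntervalIntegrable u volume p q → IntervalIntegrable v volume p q := by
    intro u v p q hpq hae hu
    rw [intervalIntegrable_iff_integrableOn_Ioc_of_le hpq] at hu ⊢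
    refine hu.congr ?_
    have h1' : ∀ᵐ x ∂(volume.restrict (Set.Ioc p q)), x ∈ Set.Ioc p q → u x = v x :=
      ae_restrict_of_ae hae
    have h2' := ae_restrict_mem (μ := volume) (measurableSet_Ioc (a := p) (b := q))
    filter_upwards [h1', h2'] with x hx hmx
    exact hx hmx
  set f : ℝ → ℝ := fun x =>
    if x < a then 1/(x+G+1)
    else if x < b then 1/(x+G+1) + 1/(x+G-1) - 1/(x+1)
    else 1/(x+G-1) with hfdef
  -- piecewise a.e. identification on each subinterval
  have eq1 : ∀ᵐ x : ℝ, x ∈ Set.Ioc (α-2) a → (1:ℝ)/(x+(G+1)) = f x := by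
    filter_upwards [ae_a] with x hx hmem
    simp only [hfdef]
    rw [if_pos (lt_of_le_of_ne hmem.2 hx)]
    ring
  have eq2 : ∀ᵐ x : ℝ, x ∈ Set.Ioc a b →
      (1:ℝ)/(x+(G+1)) + 1/(x+(G-1)) - 1/(x+1) = f x := by
    filter_upwards [ae_b] with x hx hmem
    simp only [hfdef]
    rw [if_neg (not_lt.2 (le_of_lt hmem.1)), if_pos (lt_of_le_of_ne hmem.2 hx)]
    ring
  have eq3 : ∀ x : ℝ, x ∈ Set.Ioc b α → (1:ℝ)/(x+(G-1)) = f x := by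
    intro x hmem
    simp only [hfdef]
    rw [if_neg (not_lt.2 (le_trans hAB (le_of_lt hmem.1))),
      if_neg (not_lt.2 (le_of_lt hmem.1))]
    ring
  -- integrability of f on each subinterval
  have I1 : IntervalIntegrable f volume (α-2) a :=
    congr_int (fun x => 1/(x+(G+1))) f (α-2) a (le_of_lt hA) eq1
      (intble (α-2) a (G+1) (by linarith) (by linarith))
  have I2 : IntervalIntegrable f volume a b :=
    congr_int (fun x => 1/(x+(G+1)) + 1/(x+(G-1)) - 1/(x+1)) f a b hAB eq2
      (((intble a b (G+1) (by linarith) (by linarith)).add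
        (intble a b (G-1) (by linarith) (by linarith))).sub
        (intble a b 1 (by linarith) (by linarith)))
  have I3 : IntervalIntegrable f volume b α :=
    congr_int (fun x => 1/(x+(G-1))) f b α hB (Filter.Eventually.of_forall eq3)
      (intble b α (G-1) (by linarith) (by linarith))
  -- compute each piece
  have uIoc1 : Set.uIoc (α-2) a = Set.Ioc (α-2) a := Set.uIoc_of_le (le_of_lt hA)
  have uIoc2 : Set.uIoc a b = Set.Ioc a b := Set.uIoc_of_le hAB
  have uIoc3 : Set.uIoc b α = Set.Ioc b α := Set.uIoc_of_le hB
  have E1 : ∫ x in (α-2)..a, f x = Real.log (a+G+1) - Real.log (α+G-1) := by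
    rw [← intervalIntegral.integral_congr_ae (f := fun x => (1:ℝ)/(x+(G+1))) (g := f)
      (by rw [uIoc1]; exact eq1)]
    have := key (α-2) a (G+1) (by linarith) (by linarith)
    rw [show a + (G+1) = a+G+1 by ring, show α - 2 + (G+1) = α+G-1 by ring] at this
    exact this
  have E2 : ∫ x in a..b, f x =
      (Real.log (b+G+1) - Real.log (a+G+1)) + (Real.log (b+G-1) - Real.log (a+G-1))
        - (Real.log (b+1) - Real.log (a+1)) := by
    rw [← intervalIntegral.integral_congr_ae
      (f := fun x => (1:ℝ)/(x+(G+1)) + 1/(x+(G-1)) - 1/(x+1)) (g := f)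
      (by rw [uIoc2]; exact eq2)]
    rw [intervalIntegral.integral_sub
      ((intble a b (G+1) (by linarith) (by linarith)).add
        (intble a b (G-1) (by linarith) (by linarith)))
      (intble a b 1 (by linarith) (by linarith)),
      intervalIntegral.integral_add (intble a b (G+1) (by linarith) (by linarith))
        (intble a b (G-1) (by linarith) (by linarith))]
    have k1 := key a b (G+1) (by linarith) (by linarith)
    have k2 := key a b (G-1) (by linarith) (by linarith)
    have k3 := key a b 1 (by linarith) (by linarith)
    rw [show a + (G+1) = a+G+1 by ring, show b + (G+1) = b+G+1 by ring] at k1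
    rw [show a + (G-1) = a+G-1 by ring, show b + (G-1) = b+G-1 by ring] at k2
    rw [k1, k2, k3]
  have E3 : ∫ x in b..α, f x = Real.log (α+G-1) - Real.log (b+G-1) := by
    rw [← intervalIntegral.integral_congr_ae (f := fun x => (1:ℝ)/(x+(G-1))) (g := f)
      (by rw [uIoc3]; exact Filter.Eventually.of_forall eq3)]
    have := key b α (G-1) (by linarith) (by linarith)
    rw [show b + (G-1) = b+G-1 by ring, show α + (G-1) = α+G-1 by ring] at this
    exact this
  -- combine
  have split : ∫ x in (α-2)..α, f x =
      (∫ x in (α-2)..a, f x) + ((∫ x in a..b, f x) + (∫ x in b..α, f x)) := by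
    rw [intervalIntegral.integral_add_adjacent_intervals I2 I3,
      intervalIntegral.integral_add_adjacent_intervals I1 (I2.trans I3)]
  have main : ∫ x in (α-2)..α, f x = 3 * Real.log G := by
    rw [split, E1, E2, E3, hb1, hb2, ha1, ha2,
      Real.log_div (by positivity) (ne_of_gt hαpos),
      Real.log_mul (ne_of_gt hG0) (ne_of_gt ht),
      Real.log_div (ne_of_gt ht) (by positivity),
      Real.log_mul (by positivity) (ne_of_gt h2α),
      Real.log_pow, one_div, one_div, Real.log_inv, Real.log_inv]
    push_cast
    ring
  rw [intervalIntegral.integral_const_mul]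
  rw [hfdef] at main
  rw [main]
  have hlog : (0:ℝ) < Real.log G := Real.log_pos hG1
  rw [inv_mul_cancel₀ (by positivity)]
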